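/- arXiv:2104.01637 — 3 statements merged into one kernel-verified Lean document; each statement's English description precedes it below -/
import Mathlib

section
/- Let a, b, c, m, e be real numbers with a + m < 0, am − bc > 0, b ≠ 0, and e² < 2(a+m)(bc−am)/(m² + (am−bc)). Define V(x,y) = (am−bc)x² + (mx−by)² and let L be the differential generator of the Itô system dx = (ax+by)dt + ex dξ, dy = (cx+my)dt, so that LV(x,y) = (ax+by)·∂V/∂x + (cx+my)·∂V/∂y + (1/2)e²x²·∂²V/∂x². Then LV(x,y) ≤ 0 for all (x,y) ∈ ℝ², with LV(x,y) < 0 whenever x ≠ 0. -/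
noncomputable def V1 (a b c m : ℝ) : ℝ → ℝ → ℝ :=
  fun x y => (a * m - b * c) * x ^ 2 + (m * x - b * y) ^ 2

noncomputable def LV1 (a b c m e : ℝ) (x y : ℝ) : ℝ :=
  (a * x + b * y) * deriv (fun x' => V1 a b c m x' y) x
    + (c * x + m * y) * deriv (fun y' => V1 a b c m x y') y
    + (1 / 2) * e ^ 2 * x ^ 2 * deriv (deriv (fun x' => V1 a b c m x' y)) x

lemma dV1_x (a b c m y x : ℝ) :
    deriv (fun x' => V1 a b c m x' y) x
      = (a * m - b * c) * (2 * x) + 2 * (m * x - b * y) * m := by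
  have h : HasDerivAt (fun x' : ℝ => (a * m - b * c) * x' ^ 2 + (m * x' - b * y) ^ 2)
      ((a * m - b * c) * (2 * x ^ 1) + (2 : ℕ) * (m * x - b * y) ^ 1 * (m * 1)) x := by
    exact ((hasDerivAt_pow 2 x).const_mul _).add
      ((((hasDerivAt_id x).const_mul m).sub_const (b * y)).pow 2)
  simpa [V1] using h.deriv.trans (by ring)

lemma dV1_y (a b c m x y : ℝ) :
    deriv (fun y' => V1 a b c m x y') y = 2 * (m * x - b * y) * (-b) := by
  have h : HasDerivAt (fun y' : ℝ => (a * m - b * c) * x ^ 2 + (m * x - b * y') ^ 2)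
      (0 + (2 : ℕ) * (m * x - b * y) ^ 1 * (0 - b * 1)) y := by
    exact (hasDerivAt_const y _).add
      (((hasDerivAt_const y (m * x)).sub ((hasDerivAt_id y).const_mul b)).pow 2)
  simpa [V1] using h.deriv.trans (by ring)

lemma dV1_xx (a b c m y x : ℝ) :
    deriv (deriv (fun x' => V1 a b c m x' y)) x = 2 * (a * m - b * c) + 2 * m ^ 2 := by
  have h1 : deriv (fun x' => V1 a b c m x' y)
      = fun x' => (a * m - b * c) * (2 * x') + 2 * (m * x' - b * y) * m := by
    funext t; exact dV1_x a b c m y t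
  rw [h1]
  have h : HasDerivAt (fun x' : ℝ => (a * m - b * c) * (2 * x') + 2 * (m * x' - b * y) * m)
      ((a * m - b * c) * 2 + 2 * m * m) x := by
    have hA : HasDerivAt (fun x' : ℝ => (a * m - b * c) * (2 * x'))
        ((a * m - b * c) * 2) x := by
      simpa using ((hasDerivAt_id x).const_mul (2:ℝ)).const_mul (a * m - b * c)
    have hB : HasDerivAt (fun x' : ℝ => 2 * (m * x' - b * y) * m) (2 * m * m) x := by
      have := (((hasDerivAt_id x).const_mul m).sub_const (b * y)).const_mul (2:ℝ)
      simpa [mul_comm, mul_assoc, mul_left_comm] using this.mul_const m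
    exact hA.add hB
  exact h.deriv.trans (by ring)

lemma LV1_eq (a b c m e x y : ℝ) :
    LV1 a b c m e x y
      = x ^ 2 * (2 * (a * m - b * c) * (a + m) + e ^ 2 * (m ^ 2 + (a * m - b * c))) := by
  rw [LV1, dV1_x, dV1_y, dV1_xx]; ring

theorem stmt_1 (a b c m e : ℝ) (h1 : a + m < 0) (h2 : a * m - b * c > 0) (h3 : b ≠ 0)
    (h4 : e ^ 2 < 2 * (a + m) * (b * c - a * m) / (m ^ 2 + (a * m - b * c))) :
    (∀ x y : ℝ, LV1 a b c m e x y ≤ 0) ∧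
    (∀ x y : ℝ, x ≠ 0 → LV1 a b c m e x y < 0) := by
  have hden : (0:ℝ) < m ^ 2 + (a * m - b * c) := by positivity
  have hK : 2 * (a * m - b * c) * (a + m) + e ^ 2 * (m ^ 2 + (a * m - b * c)) < 0 := by
    have hlt : e ^ 2 * (m ^ 2 + (a * m - b * c)) < 2 * (a + m) * (b * c - a * m) :=
      (lt_div_iff₀ hden).mp h4
    nlinarith
  constructor
  · intro x y
    rw [LV1_eq]
    nlinarith [sq_nonneg x]
  · intro x y hx
    rw [LV1_eq]
    have : 0 < x ^ 2 := by positivity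
    nlinarith
end

section
/- Let a, b, c, m, f ∈ ℝ with a+m < 0 and am − bc > 0. Then the quadratic form V(x,y) = [c² + m² + (am−bc)]x² + 2[ac + bm − c f²/2]xy + [a² + b² + (am−bc) − (a+m)f²/2]y² is positive definite on ℝ², provided f² < (−p + √(p² + c²q))/c² when c ≠ 0, where p = (a+m)(c²+m²+am−bc) − 2c(ac+bm) and q = 4(am−bc)[(a+m)²+(b−c)²]; when c = 0 it is positive definite for all f. -/
private lemma quad_pos_aux (A B C x y : ℝ) (hA : 0 < A) (hD : 0 < A * C - B ^ 2)
    (hxy : x ≠ 0 ∨ y ≠ 0) : 0 < A * x ^ 2 + 2 * B * x * y + C * y ^ 2 := by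
  rcases eq_or_ne y 0 with hy | hy
  · subst hy
    have hx : x ≠ 0 := hxy.resolve_right (by simp)
    have : 0 < x ^ 2 := by positivity
    nlinarith
  · have hy2 : 0 < y ^ 2 := by positivity
    nlinarith [sq_nonneg (A * x + B * y), mul_pos hD hy2]

theorem stmt_6 (a b c m f : ℝ) (h1 : a + m < 0) (h2 : a * m - b * c > 0)
    (hf : c ≠ 0 →
      f ^ 2 < (-( (a + m) * (c ^ 2 + m ^ 2 + a * m - b * c) - 2 * c * (a * c + b * m))
          + Real.sqrt (((a + m) * (c ^ 2 + m ^ 2 + a * m - b * c) - 2 * c * (a * c + b * m)) ^ 2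
            + c ^ 2 * (4 * (a * m - b * c) * ((a + m) ^ 2 + (b - c) ^ 2)))) / c ^ 2) :
    ∀ x y : ℝ, (x, y) ≠ (0, 0) →
      (c ^ 2 + m ^ 2 + (a * m - b * c)) * x ^ 2
        + 2 * (a * c + b * m - c * f ^ 2 / 2) * x * y
        + (a ^ 2 + b ^ 2 + (a * m - b * c) - (a + m) * f ^ 2 / 2) * y ^ 2 > 0 := by
  intro x y hxy
  have ht : (0:ℝ) ≤ f ^ 2 := sq_nonneg f
  obtain ⟨p, hpdef⟩ : ∃ p : ℝ,
      p = (a + m) * (c ^ 2 + m ^ 2 + a * m - b * c) - 2 * c * (a * c + b * m) := ⟨_, rfl⟩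
  obtain ⟨q, hqdef⟩ : ∃ q : ℝ,
      q = 4 * (a * m - b * c) * ((a + m) ^ 2 + (b - c) ^ 2) := ⟨_, rfl⟩
  rw [← hpdef, ← hqdef] at hf
  have hq : q > 0 := by
    have ham : (a + m) ^ 2 > 0 := by nlinarith
    have : (b - c) ^ 2 ≥ 0 := sq_nonneg _
    rw [hqdef]; nlinarith
  -- key discriminant inequality
  have hdisc : c ^ 2 * f ^ 2 * f ^ 2 + 2 * p * f ^ 2 - q < 0 := by
    by_cases hc : c = 0
    · subst hc
      have hpneg : p ≤ 0 := by
        have hpos : (0:ℝ) ^ 2 + m ^ 2 + a * m - b * 0 > 0 := by nlinarith [sq_nonneg m]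
        rw [hpdef]; nlinarith
      nlinarith [mul_nonneg (neg_nonneg.mpr hpneg) ht]
    · have hf' := hf hc
      have hc2 : (0:ℝ) < c ^ 2 := by positivity
      have harg : (0:ℝ) ≤ p ^ 2 + c ^ 2 * q := by nlinarith [sq_nonneg p]
      obtain ⟨s, hsdef⟩ : ∃ s : ℝ, s = Real.sqrt (p ^ 2 + c ^ 2 * q) := ⟨_, rfl⟩
      rw [← hsdef] at hf'
      have hs2 : s ^ 2 = p ^ 2 + c ^ 2 * q := by rw [hsdef]; exact Real.sq_sqrt harg
      have hsnn : 0 ≤ s := hsdef ▸ Real.sqrt_nonneg _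
      obtain ⟨w, hwdef⟩ : ∃ w : ℝ, w = c ^ 2 * f ^ 2 := ⟨_, rfl⟩
      have hw : 0 ≤ w := by rw [hwdef]; positivity
      have hlt : w + p < s := by
        have := (lt_div_iff₀ hc2).mp hf'
        rw [hwdef]; linarith
      have hkey : (w + p) ^ 2 < p ^ 2 + c ^ 2 * q := by
        rcases le_or_gt 0 (w + p) with h | h
        · calc (w + p) ^ 2 < s ^ 2 := by nlinarith
            _ = p ^ 2 + c ^ 2 * q := hs2
        · have h2p : w * (w + 2 * p) ≤ 0 :=
            mul_nonpos_of_nonneg_of_nonpos hw (by linarith)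
          nlinarith [mul_pos hc2 hq]
      have heq : c ^ 2 * (c ^ 2 * f ^ 2 * f ^ 2 + 2 * p * f ^ 2 - q)
          = (w + p) ^ 2 - (p ^ 2 + c ^ 2 * q) := by rw [hwdef]; ring
      have h5 : c ^ 2 * (c ^ 2 * f ^ 2 * f ^ 2 + 2 * p * f ^ 2 - q) < 0 := by
        rw [heq]; linarith
      by_contra h
      push_neg at h
      have := mul_nonneg hc2.le h
      linarith
  apply quad_pos_aux
  · nlinarith [sq_nonneg c, sq_nonneg m]
  · have hid : (c ^ 2 + m ^ 2 + (a * m - b * c))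
        * (a ^ 2 + b ^ 2 + (a * m - b * c) - (a + m) * f ^ 2 / 2)
        - (a * c + b * m - c * f ^ 2 / 2) ^ 2
        = (q - 2 * p * f ^ 2 - c ^ 2 * f ^ 2 * f ^ 2) / 4 := by
      rw [hpdef, hqdef]; ring
    rw [hid]; linarith
  · by_contra h
    push_neg at h
    exact hxy (by simp [h.1, h.2])
end

section
/- Let k > 0 and ω ≠ 0 be real, and σ ∈ ℝ with σ² < 2kω²/(ω²+1). Define V(x,y) = (1/(2[σ²(ω²+1) − 2kω²]))·{2[(ω²+1)σ² − ω⁴ − ω² − k²]x² − 4kxy − 2(ω²+1)y²}. Then V is positive definite on ℝ². -/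
theorem stmt_10 (k ω σ : ℝ) (hk : k > 0) (hω : ω ≠ 0)
    (hσ : σ ^ 2 < 2 * k * ω ^ 2 / (ω ^ 2 + 1)) :
    ∀ x y : ℝ, (x, y) ≠ (0, 0) →
      (1 / (2 * (σ ^ 2 * (ω ^ 2 + 1) - 2 * k * ω ^ 2))) *
        (2 * ((ω ^ 2 + 1) * σ ^ 2 - ω ^ 4 - ω ^ 2 - k ^ 2) * x ^ 2
          - 4 * k * x * y - 2 * (ω ^ 2 + 1) * y ^ 2) > 0 := by
  intro x y hxy
  have hB : (0:ℝ) < ω ^ 2 + 1 := by positivity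
  have hω2 : (0:ℝ) < ω ^ 2 := by positivity
  have hσ' : σ ^ 2 * (ω ^ 2 + 1) < 2 * k * ω ^ 2 := by
    have h := (lt_div_iff₀ hB).mp hσ
    linarith
  have hden : 1 / (2 * (σ ^ 2 * (ω ^ 2 + 1) - 2 * k * ω ^ 2)) < 0 := by
    apply div_neg_of_pos_of_neg one_pos
    linarith
  have hABk : (ω ^ 4 + ω ^ 2 + k ^ 2 - σ ^ 2 * (ω ^ 2 + 1)) * (ω ^ 2 + 1) - k ^ 2 > 0 := by
    nlinarith [mul_nonneg hω2.le (sq_nonneg (ω ^ 2 - k + 1)),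
      mul_pos (show (0:ℝ) < 2 * k * ω ^ 2 - σ ^ 2 * (ω ^ 2 + 1) by linarith) hB]
  have hA : (0:ℝ) < ω ^ 4 + ω ^ 2 + k ^ 2 - σ ^ 2 * (ω ^ 2 + 1) := by
    nlinarith [sq_nonneg (ω ^ 2 - k), hω2]
  have hnum : 2 * ((ω ^ 2 + 1) * σ ^ 2 - ω ^ 4 - ω ^ 2 - k ^ 2) * x ^ 2
          - 4 * k * x * y - 2 * (ω ^ 2 + 1) * y ^ 2 < 0 := by
    have hx : x ≠ 0 ∨ y ≠ 0 := by
      by_contra h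
      push_neg at h
      exact hxy (by simp [h.1, h.2])
    rcases hx with hx | hy
    · have hx2 : 0 < x ^ 2 := by positivity
      nlinarith [sq_nonneg ((ω ^ 2 + 1) * y + k * x), mul_pos hABk hx2, hB]
    · have hy2 : 0 < y ^ 2 := by positivity
      nlinarith [sq_nonneg ((ω ^ 4 + ω ^ 2 + k ^ 2 - σ ^ 2 * (ω ^ 2 + 1)) * x + k * y),
        mul_pos hABk hy2, hA]
  exact mul_pos_of_neg_of_neg hden hnum
end
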